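/- arXiv:2204.03017 — 2 statements merged into one kernel-verified Lean document; each statement's English description precedes it below -/
import Mathlib

section
/- (Multi-step bound for gradual sampling, Phase 1.) Let F_s, F_l : ℝ^d → ℝ be differentiable, let p ∈ [0,1], set 𝓛 = (1 − p)F_s + pF_l, and suppose 𝓛 is L-smooth, satisfies the μ-PL condition with infimum value 𝓛*, and ‖∇F_s(w) − ∇F_l(w)‖ ≤ Δ̂ for all w ∈ ℝ^d. Let (W_t) be adapted to a filtration (𝓕_t) with deterministic initial point W_0 = w_0, and let G_t be square-integrable, 𝓕_{t+1}-measurable ℝ^d-valued random vectors with, almost surely, W_{t+1} = W_t − η₁G_t, E[G_t | 𝓕_t] = ∇F_s(W_t), and E[‖G_t − ∇F_s(W_t)‖² | 𝓕_t] ≤ σ². If 0 < η₁ ≤ 1/L and η₁μ ≤ 1, then for every n' ∈ ℕ, E[𝓛(W_{n'})] − 𝓛* ≤ exp(−η₁μn')(𝓛(w_0) − 𝓛*) + p²Δ̂²/(2μ) + η₁σ²L/(2μ). -/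
open MeasureTheory RealInnerProductSpace



lemma descent_lemma {F : Type*} [NormedAddCommGroup F] [InnerProductSpace ℝ F] [CompleteSpace F]
    (f : F → ℝ) (hf : Differentiable ℝ f) {L : ℝ} (hL : 0 ≤ L)
    (hlip : LipschitzWith (Real.toNNReal L) (gradient f)) (x y : F) :
    f y ≤ f x + ⟪gradient f x, y - x⟫ + L / 2 * ‖y - x‖ ^ 2 := by
  set v := y - x with hv
  have hdist : ∀ a b : F, ‖gradient f a - gradient f b‖ ≤ L * ‖a - b‖ := by
    intro a b
    have := hlip.dist_le_mul a b
    rwa [Real.coe_toNNReal _ hL, dist_eq_norm, dist_eq_norm] at this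
  set ψ : ℝ → ℝ := fun t => f (x + t • v) - t * ⟪gradient f x, v⟫ - L * ‖v‖ ^ 2 / 2 * t ^ 2
    with hψdef
  have hc : ∀ t : ℝ, HasDerivAt (fun s : ℝ => f (x + s • v)) ⟪gradient f (x + t • v), v⟫ t := by
    intro t
    have h1 : HasDerivAt (fun s : ℝ => x + s • v) v t := by
      simpa using ((hasDerivAt_id t).smul_const v).const_add x
    have h2 := (hf (x + t • v)).hasGradientAt.hasFDerivAt
    have := h2.comp_hasDerivAt t h1
    simpa [InnerProductSpace.toDual_apply_apply, Function.comp_def] using this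
  have hψ : ∀ t : ℝ, HasDerivAt ψ
      (⟪gradient f (x + t • v), v⟫ - ⟪gradient f x, v⟫ - L * ‖v‖ ^ 2 / 2 * (2 * t)) t := by
    intro t
    have h1 := (hc t).sub ((hasDerivAt_id t).mul_const ⟪gradient f x, v⟫)
    have h2 := ((hasDerivAt_pow 2 t).const_mul (L * ‖v‖ ^ 2 / 2))
    have := h1.sub h2
    exact this.congr_deriv (by simp)
  have hmono : AntitoneOn ψ (Set.Icc 0 1) := by
    apply antitoneOn_of_deriv_nonpos (convex_Icc 0 1)
    · exact (fun t _ => ((hψ t).differentiableAt).continuousAt.continuousWithinAt)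
    · intro t ht
      exact ((hψ t).differentiableAt).differentiableWithinAt
    · intro t ht
      rw [interior_Icc] at ht
      rw [(hψ t).deriv]
      have hb : ⟪gradient f (x + t • v) - gradient f x, v⟫ ≤ L * t * ‖v‖ ^ 2 := by
        calc ⟪gradient f (x + t • v) - gradient f x, v⟫
            ≤ ‖gradient f (x + t • v) - gradient f x‖ * ‖v‖ := real_inner_le_norm _ _
          _ ≤ (L * ‖x + t • v - x‖) * ‖v‖ := by
              have := hdist (x + t • v) x
              simpa using mul_le_mul_of_nonneg_right (by simpa using this) (norm_nonneg v)
          _ = L * t * ‖v‖ ^ 2 := by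
              rw [add_sub_cancel_left, norm_smul, Real.norm_eq_abs, abs_of_pos ht.1]
              ring
      have := inner_sub_left (𝕜 := ℝ) (gradient f (x + t • v)) (gradient f x) v
      nlinarith [hb]
  have h01 := hmono (Set.left_mem_Icc.2 zero_le_one) (Set.right_mem_Icc.2 zero_le_one) zero_le_one
  have hxy : x + v = y := by rw [hv]; abel
  have h0 : ψ 0 = f x := by simp [hψdef]
  have h1 : ψ 1 = f y - ⟪gradient f x, v⟫ - L * ‖v‖ ^ 2 / 2 := by
    simp [hψdef, hxy]

  rw [h0, h1] at h01
  linarith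


lemma gradient_combo {F : Type*} [NormedAddCommGroup F] [InnerProductSpace ℝ F] [CompleteSpace F]
    (Fs Fl : F → ℝ) (p : ℝ) (hFs : Differentiable ℝ Fs) (hFl : Differentiable ℝ Fl) (v : F) :
    gradient (fun w => (1 - p) * Fs w + p * Fl w) v
      = (1 - p) • gradient Fs v + p • gradient Fl v := by
  have h1 : HasGradientAt Fs (gradient Fs v) v := (hFs v).hasGradientAt
  have h2 : HasGradientAt Fl (gradient Fl v) v := (hFl v).hasGradientAt
  have h : HasFDerivAt (fun w => (1 - p) * Fs w + p * Fl w)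
      ((1 - p) • (InnerProductSpace.toDual ℝ F (gradient Fs v))
        + p • (InnerProductSpace.toDual ℝ F (gradient Fl v))) v :=
    (h1.hasFDerivAt.const_mul (1 - p)).add (h2.hasFDerivAt.const_mul p)
  have h3 : (InnerProductSpace.toDual ℝ F).symm
      ((1 - p) • (InnerProductSpace.toDual ℝ F (gradient Fs v))
        + p • (InnerProductSpace.toDual ℝ F (gradient Fl v)))
      = (1 - p) • gradient Fs v + p • gradient Fl v := by
    simp [gradient]
  rw [← h3]
  exact h.hasGradientAt.gradient

lemma measurable_gradient' {d : ℕ} (f : EuclideanSpace ℝ (Fin d) → ℝ) :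
    Measurable (gradient f) := by
  have : gradient f = fun x => (InnerProductSpace.toDual ℝ _).symm (fderiv ℝ f x) := rfl
  rw [this]
  exact (InnerProductSpace.toDual ℝ _).symm.continuous.measurable.comp (measurable_fderiv ℝ f)

lemma integrable_inner_of_memLp2 {Ω : Type*} {mΩ : MeasurableSpace Ω} {μ : Measure Ω}
    {F : Type*} [NormedAddCommGroup F] [InnerProductSpace ℝ F]
    {f g : Ω → F} (hf : MemLp f 2 μ) (hg : MemLp g 2 μ) :
    Integrable (fun ω => ⟪f ω, g ω⟫) μ := by
  have h := L2.integrable_inner (𝕜 := ℝ) (hf.toLp f) (hg.toLp g)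
  refine h.congr ?_
  filter_upwards [hf.coeFn_toLp, hg.coeFn_toLp] with ω h1 h2
  rw [h1, h2]

lemma integrable_norm_sq_of_memLp2 {Ω : Type*} {mΩ : MeasurableSpace Ω} {μ : Measure Ω}
    {F : Type*} [NormedAddCommGroup F] [InnerProductSpace ℝ F]
    {f : Ω → F} (hf : MemLp f 2 μ) :
    Integrable (fun ω => ‖f ω‖ ^ 2) μ := by
  have := integrable_inner_of_memLp2 hf hf
  simpa [real_inner_self_eq_norm_sq] using this


lemma condexp_clm_comm {Ω : Type*} {m mΩ : MeasurableSpace Ω} (hm : m ≤ mΩ)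
    {μ : Measure Ω} [IsFiniteMeasure μ]
    {E F : Type*} [NormedAddCommGroup E] [NormedSpace ℝ E] [CompleteSpace E]
    [NormedAddCommGroup F] [NormedSpace ℝ F] [CompleteSpace F]
    (T : E →L[ℝ] F) {f : Ω → E} (hf : Integrable f μ) :
    μ[fun ω => T (f ω)|m] =ᵐ[μ] fun ω => T ((μ[f|m]) ω) := by
  refine (ae_eq_condExp_of_forall_setIntegral_eq hm (T.integrable_comp hf)
    (fun s _ _ => (T.integrable_comp integrable_condExp).integrableOn)
    (fun s hs _ => ?_) ?_).symm
  · calc ∫ ω in s, T ((μ[f|m]) ω) ∂μ = T (∫ ω in s, (μ[f|m]) ω ∂μ) :=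
          T.integral_comp_comm integrable_condExp.integrableOn
    _ = T (∫ ω in s, f ω ∂μ) := by rw [setIntegral_condExp hm hf hs]
    _ = ∫ ω in s, T (f ω) ∂μ := (T.integral_comp_comm hf.integrableOn).symm
  · exact StronglyMeasurable.aestronglyMeasurable
      (T.continuous.comp_stronglyMeasurable stronglyMeasurable_condExp)

lemma integral_inner_zero_of_condexp_zero {Ω : Type*} {m mΩ : MeasurableSpace Ω} (hm : m ≤ mΩ)
    {μ : Measure Ω} [IsProbabilityMeasure μ] {d : ℕ}
    {X D : Ω → EuclideanSpace ℝ (Fin d)}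
    (hXm : StronglyMeasurable[m] X) (hX2 : MemLp X 2 μ) (hD2 : MemLp D 2 μ)
    (hD : μ[D|m] =ᵐ[μ] 0) :
    ∫ ω, ⟪X ω, D ω⟫ ∂μ = 0 := by
  have hinner : ∀ ω, ⟪X ω, D ω⟫ = ∑ i, X ω i * D ω i := by
    intro ω
    simp [PiLp.inner_apply, RCLike.inner_apply, starRingEnd_apply, mul_comm]
  have hXi2 : ∀ i, MemLp (fun ω => X ω i) 2 μ := fun i =>
    (EuclideanSpace.proj i : EuclideanSpace ℝ (Fin d) →L[ℝ] ℝ).comp_memLp' hX2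
  have hDi2 : ∀ i, MemLp (fun ω => D ω i) 2 μ := fun i =>
    (EuclideanSpace.proj i : EuclideanSpace ℝ (Fin d) →L[ℝ] ℝ).comp_memLp' hD2
  have hmul : ∀ i : Fin d, Integrable (fun ω => X ω i * D ω i) μ := by
    intro i
    have h := L2.integrable_inner (𝕜 := ℝ) ((hXi2 i).toLp _) ((hDi2 i).toLp _)
    refine h.congr ?_
    filter_upwards [(hXi2 i).coeFn_toLp, (hDi2 i).coeFn_toLp] with ω h1 h2
    rw [h1, h2]
    simp [RCLike.inner_apply, starRingEnd_apply, mul_comm]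
  have hsum : ∫ ω, ⟪X ω, D ω⟫ ∂μ = ∑ i, ∫ ω, X ω i * D ω i ∂μ := by
    simp_rw [hinner]
    exact integral_finset_sum _ (fun i _ => hmul i)
  rw [hsum]
  refine Finset.sum_eq_zero fun i _ => ?_
  have hDi0 : μ[fun ω => D ω i|m] =ᵐ[μ] 0 := by
    have h := condexp_clm_comm hm (EuclideanSpace.proj i (𝕜 := ℝ)) (hD2.integrable one_le_two)
    refine h.trans ?_
    filter_upwards [hD] with ω hω
    simp [hω]
  have hXim : StronglyMeasurable[m] (fun ω => X ω i) :=
    ((EuclideanSpace.proj i (𝕜 := ℝ)).continuous.comp_stronglyMeasurable hXm)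
  have hpull := condExp_mul_of_stronglyMeasurable_left (μ := μ) (m := m) hXim (hmul i)
    ((hDi2 i).integrable one_le_two)
  haveI : SigmaFinite (μ.trim hm) := by
    have : IsFiniteMeasure (μ.trim hm) := isFiniteMeasure_trim hm
    infer_instance
  have hzero : (fun ω => X ω i) * μ[fun ω => D ω i|m] =ᵐ[μ] 0 := by
    filter_upwards [hDi0] with ω hω
    simp [Pi.mul_apply, hω]
  have h0 : ∫ ω, (μ[(fun ω' => X ω' i) * fun ω' => D ω' i|m]) ω ∂μ = 0 := by
    rw [integral_congr_ae (hpull.trans hzero)]; simp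
  have key : ∫ ω, ((fun ω' => X ω' i) * fun ω' => D ω' i) ω ∂μ = 0 := by
    rw [← integral_condExp hm]; exact h0
  simpa using key


set_option maxHeartbeats 1000000 in
/-- Multi-step bound for gradual sampling (Phase 1): running SGD with stochastic
gradients unbiased for the small-variance component `Fs` of the mixture objective
`𝓛 = (1 - p) Fs + p Fl` converges linearly up to bias and noise floors. -/
theorem multi_step_gradual_sampling_phase1
    {d : ℕ} (Fs Fl : EuclideanSpace ℝ (Fin d) → ℝ) (p : ℝ)
    (hp0 : 0 ≤ p) (hp1 : p ≤ 1)
    (hFs : Differentiable ℝ Fs) (hFl : Differentiable ℝ Fl)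
    (𝓛 : EuclideanSpace ℝ (Fin d) → ℝ)
    (h𝓛 : 𝓛 = fun v => (1 - p) * Fs v + p * Fl v)
    (L μPL Lstar Δ σ : ℝ) (hL : 0 < L)
    (hsmooth : LipschitzWith (Real.toNNReal L) (gradient 𝓛))
    (hμ : 0 < μPL)
    (hattained : ∃ wstar, 𝓛 wstar = Lstar ∧ ∀ v, Lstar ≤ 𝓛 v)
    (hPL : ∀ v, 2 * μPL * (𝓛 v - Lstar) ≤ ‖gradient 𝓛 v‖ ^ 2)
    (hΔ : ∀ v, ‖gradient Fs v - gradient Fl v‖ ≤ Δ)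
    {Ω : Type*} {mΩ : MeasurableSpace Ω} (P : Measure Ω) [IsProbabilityMeasure P]
    (ℱ : Filtration ℕ mΩ)
    (W G : ℕ → Ω → EuclideanSpace ℝ (Fin d))
    (hadapted : Adapted ℱ W)
    (hGmeas : ∀ t, StronglyMeasurable[ℱ (t + 1)] (G t))
    (hG2 : ∀ t, MemLp (G t) 2 P)
    (w0 : EuclideanSpace ℝ (Fin d)) (hW0 : ∀ ω, W 0 ω = w0)
    (η₁ : ℝ)
    (hupdate : ∀ t, ∀ᵐ ω ∂P, W (t + 1) ω = W t ω - η₁ • G t ω)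
    (hmean : ∀ t, P[G t | ℱ t] =ᵐ[P] fun ω => gradient Fs (W t ω))
    (hvar : ∀ t, ∀ᵐ ω ∂P,
      (P[(fun ω' => ‖G t ω' - gradient Fs (W t ω')‖ ^ 2) | ℱ t]) ω ≤ σ ^ 2)
    (hη0 : 0 < η₁) (hη : η₁ ≤ 1 / L) (hημ : η₁ * μPL ≤ 1)
    (n' : ℕ) :
    (∫ ω, 𝓛 (W n' ω) ∂P) - Lstar ≤
      Real.exp (-(η₁ * μPL) * n') * (𝓛 w0 - Lstar) +
        p ^ 2 * Δ ^ 2 / (2 * μPL) + η₁ * σ ^ 2 * L / (2 * μPL) := by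
  obtain ⟨wstar, hwstar, hLstar⟩ := hattained
  have hL0 : (0:ℝ) ≤ L := hL.le
  have hΔ0 : 0 ≤ Δ := le_trans (norm_nonneg _) (hΔ w0)
  have h𝓛diff : Differentiable ℝ 𝓛 := by
    rw [h𝓛]; exact (hFs.const_mul (1 - p)).add (hFl.const_mul p)
  have hgrad : ∀ v, gradient 𝓛 v = (1 - p) • gradient Fs v + p • gradient Fl v := by
    intro v; rw [h𝓛]; exact gradient_combo Fs Fl p hFs hFl v
  have hbias : ∀ v, ‖gradient Fs v - gradient 𝓛 v‖ ≤ p * Δ := by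
    intro v
    have h : gradient Fs v - gradient 𝓛 v = p • (gradient Fs v - gradient Fl v) := by
      rw [hgrad v]; module
    rw [h, norm_smul, Real.norm_eq_abs, abs_of_nonneg hp0]
    exact mul_le_mul_of_nonneg_left (hΔ v) hp0
  have descent := fun x y => descent_lemma 𝓛 h𝓛diff hL0 hsmooth x y
  have hgsmeas : Measurable (gradient Fs) := measurable_gradient' Fs
  -- MemLp facts
  have hW2 : ∀ t, MemLp (W t) 2 P := by
    intro t; induction t with
    | zero =>
      refine (memLp_const w0).ae_eq ?_
      filter_upwards with ω using (hW0 ω).symm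
    | succ t ih =>
      refine (ih.sub ((hG2 t).const_smul η₁)).ae_eq ?_
      filter_upwards [hupdate t] with ω hω using hω.symm
  have hWmeas' : ∀ t, Measurable (W t) := fun t => (hadapted t).mono (ℱ.le t) le_rfl
  have hg𝓛lip0 : LipschitzWith (Real.toNNReal L) (fun w => gradient 𝓛 w - gradient 𝓛 0) := by
    apply LipschitzWith.of_dist_le_mul
    intro a b
    rw [dist_sub_right]
    exact hsmooth.dist_le_mul a b
  have hg𝓛W2 : ∀ t, MemLp (fun ω => gradient 𝓛 (W t ω)) 2 P := by
    intro t
    have h1 : MemLp (fun ω => gradient 𝓛 (W t ω) - gradient 𝓛 0) 2 P :=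
      hg𝓛lip0.comp_memLp (by simp) (hW2 t)
    have h2 := h1.add (memLp_const (gradient 𝓛 0))
    refine h2.ae_eq ?_
    filter_upwards with ω using by simp
  have hgsW2 : ∀ t, MemLp (fun ω => gradient Fs (W t ω)) 2 P := by
    intro t
    have hmeasb : AEStronglyMeasurable
        (fun ω => gradient Fs (W t ω) - gradient 𝓛 (W t ω)) P := by
      refine Measurable.aestronglyMeasurable ?_
      exact ((hgsmeas.comp (hWmeas' t)).sub
        (hsmooth.continuous.measurable.comp (hWmeas' t)))
    have hb : MemLp (fun ω => gradient Fs (W t ω) - gradient 𝓛 (W t ω)) 2 P :=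
      MemLp.of_bound hmeasb (p * Δ) (by filter_upwards with ω using hbias _)
    have h2 := hb.add (hg𝓛W2 t)
    refine h2.ae_eq ?_
    filter_upwards with ω using by simp
  -- integrability of 𝓛 ∘ W t
  have h𝓛bound : ∀ w : EuclideanSpace ℝ (Fin d),
      |𝓛 w| ≤ |𝓛 0| + ‖gradient 𝓛 0‖ * ‖w‖ + (3 * L / 2) * ‖w‖ ^ 2 := by
    intro w
    have hup := descent 0 w
    have hdown := descent w 0
    simp only [sub_zero, zero_sub, norm_neg] at hup hdown
    have h1 : ⟪gradient 𝓛 0, w⟫ ≤ ‖gradient 𝓛 0‖ * ‖w‖ := real_inner_le_norm _ _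
    have h2 : ⟪gradient 𝓛 w, -w⟫ ≤ ‖gradient 𝓛 w‖ * ‖w‖ := by
      calc ⟪gradient 𝓛 w, -w⟫ ≤ ‖gradient 𝓛 w‖ * ‖-w‖ := real_inner_le_norm _ _
        _ = ‖gradient 𝓛 w‖ * ‖w‖ := by rw [norm_neg]
    have h3 : ‖gradient 𝓛 w‖ ≤ ‖gradient 𝓛 0‖ + L * ‖w‖ := by
      have h4 := hsmooth.dist_le_mul w 0
      rw [Real.coe_toNNReal _ hL0, dist_eq_norm, dist_eq_norm, sub_zero] at h4
      have := norm_sub_norm_le (gradient 𝓛 w) (gradient 𝓛 0)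
      linarith
    have hnn : 0 ≤ ‖w‖ := norm_nonneg w
    have h5 : ‖gradient 𝓛 w‖ * ‖w‖ ≤ (‖gradient 𝓛 0‖ + L * ‖w‖) * ‖w‖ :=
      mul_le_mul_of_nonneg_right h3 hnn
    rw [abs_le]
    constructor
    · nlinarith [hdown, h2, h5, le_abs_self (𝓛 0), neg_abs_le (𝓛 0),
        mul_nonneg hL0 (sq_nonneg ‖w‖), sq_nonneg ‖w‖]
    · nlinarith [hup, h1, le_abs_self (𝓛 0), neg_abs_le (𝓛 0),
        mul_nonneg hL0 (sq_nonneg ‖w‖)]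
  have h𝓛W1 : ∀ t, Integrable (fun ω => 𝓛 (W t ω)) P := by
    intro t
    have hdom : Integrable
        (fun ω => |𝓛 0| + ‖gradient 𝓛 0‖ * ‖W t ω‖ + (3 * L / 2) * ‖W t ω‖ ^ 2) P := by
      refine Integrable.add (Integrable.add (integrable_const _) ?_) ?_
      · exact (((hW2 t).integrable one_le_two).norm).const_mul _
      · exact (integrable_norm_sq_of_memLp2 (hW2 t)).const_mul _
    refine hdom.mono' ?_ ?_
    · exact (h𝓛diff.continuous.comp_stronglyMeasurable
        ((hadapted t).mono (ℱ.le t) le_rfl).stronglyMeasurable).aestronglyMeasurable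
    · filter_upwards with ω
      simpa [Real.norm_eq_abs] using h𝓛bound (W t ω)
  -- one-step recursion
  set r : ℝ := 1 - η₁ * μPL with hr
  set c : ℝ := L * η₁ ^ 2 / 2 with hc
  have hc0 : 0 ≤ c := by positivity
  have hLη : η₁ * L ≤ 1 := by
    rw [div_eq_mul_inv, one_mul] at hη
    calc η₁ * L ≤ L⁻¹ * L := mul_le_mul_of_nonneg_right hη hL0
      _ = 1 := inv_mul_cancel₀ hL.ne'
  have key : ∀ t, (∫ ω, 𝓛 (W (t + 1) ω) ∂P) - Lstar ≤
      r * ((∫ ω, 𝓛 (W t ω) ∂P) - Lstar) + (η₁ * (p ^ 2 * Δ ^ 2) / 2 + c * σ ^ 2) := by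
    intro t
    have hD2 : MemLp (fun ω => G t ω - gradient Fs (W t ω)) 2 P := (hG2 t).sub (hgsW2 t)
    have hgsWsm : StronglyMeasurable[ℱ t] (fun ω => gradient Fs (W t ω)) :=
      (hgsmeas.comp (hadapted t)).stronglyMeasurable
    have hgsWint : Integrable (fun ω => gradient Fs (W t ω)) P :=
      (hgsW2 t).integrable one_le_two
    have hGint : Integrable (G t) P := (hG2 t).integrable one_le_two
    have hDce : P[fun ω => G t ω - gradient Fs (W t ω)|ℱ t] =ᵐ[P] 0 := by
      have h1 := condExp_sub (m := ℱ t) (μ := P) hGint hgsWint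
      have h2 : P[fun ω => gradient Fs (W t ω)|ℱ t] = fun ω => gradient Fs (W t ω) :=
        condExp_of_stronglyMeasurable (ℱ.le t) hgsWsm hgsWint
      refine h1.trans ?_
      filter_upwards [hmean t] with ω hω
      simp only [Pi.sub_apply, h2, hω, Pi.zero_apply, sub_self]
    have horth1 : ∫ ω, ⟪gradient 𝓛 (W t ω), G t ω - gradient Fs (W t ω)⟫ ∂P = 0 :=
      integral_inner_zero_of_condexp_zero (ℱ.le t)
        (hsmooth.continuous.comp_stronglyMeasurable (hadapted t).stronglyMeasurable) (hg𝓛W2 t) hD2 hDce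
    have horth2 : ∫ ω, ⟪gradient Fs (W t ω), G t ω - gradient Fs (W t ω)⟫ ∂P = 0 :=
      integral_inner_zero_of_condexp_zero (ℱ.le t) hgsWsm (hgsW2 t) hD2 hDce
    have hDvar : ∫ ω, ‖G t ω - gradient Fs (W t ω)‖ ^ 2 ∂P ≤ σ ^ 2 := by
      have h1 : ∫ ω, ‖G t ω - gradient Fs (W t ω)‖ ^ 2 ∂P
          = ∫ ω, (P[fun ω' => ‖G t ω' - gradient Fs (W t ω')‖ ^ 2|ℱ t]) ω ∂P :=
        (integral_condExp (ℱ.le t)).symm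
      rw [h1]
      calc ∫ ω, (P[fun ω' => ‖G t ω' - gradient Fs (W t ω')‖ ^ 2|ℱ t]) ω ∂P
          ≤ ∫ _ω, σ ^ 2 ∂P := integral_mono_ae integrable_condExp (integrable_const _) (hvar t)
        _ = σ ^ 2 := by simp
    -- pointwise descent
    have hstep : ∀ᵐ ω ∂P, 𝓛 (W (t + 1) ω) ≤
        𝓛 (W t ω) - η₁ * ⟪gradient 𝓛 (W t ω), G t ω⟫ + c * ‖G t ω‖ ^ 2 := by
      filter_upwards [hupdate t] with ω hω
      rw [hω]
      have h := descent (W t ω) (W t ω - η₁ • G t ω)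
      have he : W t ω - η₁ • G t ω - W t ω = -(η₁ • G t ω) := by abel
      rw [he] at h
      have h1 : ⟪gradient 𝓛 (W t ω), -(η₁ • G t ω)⟫
          = -(η₁ * ⟪gradient 𝓛 (W t ω), G t ω⟫) := by
        rw [inner_neg_right, real_inner_smul_right]
      have h2 : ‖-(η₁ • G t ω)‖ ^ 2 = η₁ ^ 2 * ‖G t ω‖ ^ 2 := by
        rw [norm_neg, norm_smul, Real.norm_eq_abs, mul_pow, sq_abs]
      rw [h1, h2] at h
      calc 𝓛 (W t ω - η₁ • G t ω)
          ≤ 𝓛 (W t ω) + -(η₁ * ⟪gradient 𝓛 (W t ω), G t ω⟫)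
            + L / 2 * (η₁ ^ 2 * ‖G t ω‖ ^ 2) := h
        _ = 𝓛 (W t ω) - η₁ * ⟪gradient 𝓛 (W t ω), G t ω⟫ + c * ‖G t ω‖ ^ 2 := by
            rw [hc]; ring
    -- integrabilities
    have I2 : Integrable (fun ω => ⟪gradient 𝓛 (W t ω), G t ω⟫) P :=
      integrable_inner_of_memLp2 (hg𝓛W2 t) (hG2 t)
    have I3 : Integrable (fun ω => ‖G t ω‖ ^ 2) P := integrable_norm_sq_of_memLp2 (hG2 t)
    have I4 : Integrable (fun ω => ⟪gradient 𝓛 (W t ω), gradient Fs (W t ω)⟫) P :=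
      integrable_inner_of_memLp2 (hg𝓛W2 t) (hgsW2 t)
    have I5 : Integrable (fun ω => ‖gradient Fs (W t ω)‖ ^ 2) P :=
      integrable_norm_sq_of_memLp2 (hgsW2 t)
    have I6 : Integrable (fun ω => ⟪gradient 𝓛 (W t ω), G t ω - gradient Fs (W t ω)⟫) P :=
      integrable_inner_of_memLp2 (hg𝓛W2 t) hD2
    have I7 : Integrable (fun ω => ⟪gradient Fs (W t ω), G t ω - gradient Fs (W t ω)⟫) P :=
      integrable_inner_of_memLp2 (hgsW2 t) hD2
    have I8 : Integrable (fun ω => ‖G t ω - gradient Fs (W t ω)‖ ^ 2) P :=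
      integrable_norm_sq_of_memLp2 hD2
    have IR1 : Integrable (fun ω =>
        𝓛 (W t ω) - η₁ * ⟪gradient 𝓛 (W t ω), G t ω⟫ + c * ‖G t ω‖ ^ 2) P :=
      ((h𝓛W1 t).sub (I2.const_mul η₁)).add (I3.const_mul c)
    have IR2 : Integrable (fun ω =>
        𝓛 (W t ω) - η₁ * ⟪gradient 𝓛 (W t ω), gradient Fs (W t ω)⟫
          + c * ‖gradient Fs (W t ω)‖ ^ 2) P :=
      ((h𝓛W1 t).sub (I4.const_mul η₁)).add (I5.const_mul c)
    have Irest : Integrable (fun ω =>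
        (-η₁) * ⟪gradient 𝓛 (W t ω), G t ω - gradient Fs (W t ω)⟫
        + (2 * c) * ⟪gradient Fs (W t ω), G t ω - gradient Fs (W t ω)⟫
        + c * ‖G t ω - gradient Fs (W t ω)‖ ^ 2) P :=
      ((I6.const_mul _).add (I7.const_mul _)).add (I8.const_mul _)
    -- step A : integral of descent bound
    have hA : ∫ ω, 𝓛 (W (t + 1) ω) ∂P ≤
        ∫ ω, (𝓛 (W t ω) - η₁ * ⟪gradient 𝓛 (W t ω), G t ω⟫ + c * ‖G t ω‖ ^ 2) ∂P :=
      integral_mono_ae (h𝓛W1 (t + 1)) IR1 hstep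
    -- step B : splitting off the noise
    have hpt : ∀ ω,
        𝓛 (W t ω) - η₁ * ⟪gradient 𝓛 (W t ω), G t ω⟫ + c * ‖G t ω‖ ^ 2
        = (𝓛 (W t ω) - η₁ * ⟪gradient 𝓛 (W t ω), gradient Fs (W t ω)⟫
            + c * ‖gradient Fs (W t ω)‖ ^ 2)
          + ((-η₁) * ⟪gradient 𝓛 (W t ω), G t ω - gradient Fs (W t ω)⟫
            + (2 * c) * ⟪gradient Fs (W t ω), G t ω - gradient Fs (W t ω)⟫
            + c * ‖G t ω - gradient Fs (W t ω)‖ ^ 2) := by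
      intro ω
      have hGsplit : G t ω = gradient Fs (W t ω) + (G t ω - gradient Fs (W t ω)) := by abel
      have e1 : ⟪gradient 𝓛 (W t ω), G t ω⟫
          = ⟪gradient 𝓛 (W t ω), gradient Fs (W t ω)⟫
            + ⟪gradient 𝓛 (W t ω), G t ω - gradient Fs (W t ω)⟫ := by
        conv_lhs => rw [hGsplit]
        rw [inner_add_right]
      have e2 : ‖G t ω‖ ^ 2 = ‖gradient Fs (W t ω)‖ ^ 2
          + 2 * ⟪gradient Fs (W t ω), G t ω - gradient Fs (W t ω)⟫
          + ‖G t ω - gradient Fs (W t ω)‖ ^ 2 := by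
        conv_lhs => rw [hGsplit]
        exact norm_add_sq_real _ _
      rw [e1, e2]; ring
    have hB : ∫ ω, (𝓛 (W t ω) - η₁ * ⟪gradient 𝓛 (W t ω), G t ω⟫ + c * ‖G t ω‖ ^ 2) ∂P
        = (∫ ω, (𝓛 (W t ω) - η₁ * ⟪gradient 𝓛 (W t ω), gradient Fs (W t ω)⟫
            + c * ‖gradient Fs (W t ω)‖ ^ 2) ∂P)
          + c * ∫ ω, ‖G t ω - gradient Fs (W t ω)‖ ^ 2 ∂P := by
      have e : ∫ ω, (𝓛 (W t ω) - η₁ * ⟪gradient 𝓛 (W t ω), G t ω⟫ + c * ‖G t ω‖ ^ 2) ∂P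
          = (∫ ω, (𝓛 (W t ω) - η₁ * ⟪gradient 𝓛 (W t ω), gradient Fs (W t ω)⟫
              + c * ‖gradient Fs (W t ω)‖ ^ 2) ∂P)
            + ∫ ω, ((-η₁) * ⟪gradient 𝓛 (W t ω), G t ω - gradient Fs (W t ω)⟫
              + (2 * c) * ⟪gradient Fs (W t ω), G t ω - gradient Fs (W t ω)⟫
              + c * ‖G t ω - gradient Fs (W t ω)‖ ^ 2) ∂P := by
        rw [← integral_add IR2 Irest]
        exact integral_congr_ae (Filter.Eventually.of_forall hpt)
      have I6c : Integrable
          (fun ω => (-η₁) * ⟪gradient 𝓛 (W t ω), G t ω - gradient Fs (W t ω)⟫) P :=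
        I6.const_mul _
      have I7c : Integrable
          (fun ω => (2 * c) * ⟪gradient Fs (W t ω), G t ω - gradient Fs (W t ω)⟫) P :=
        I7.const_mul _
      have I8c : Integrable (fun ω => c * ‖G t ω - gradient Fs (W t ω)‖ ^ 2) P :=
        I8.const_mul _
      have I67 : Integrable
          (fun ω => (-η₁) * ⟪gradient 𝓛 (W t ω), G t ω - gradient Fs (W t ω)⟫
            + (2 * c) * ⟪gradient Fs (W t ω), G t ω - gradient Fs (W t ω)⟫) P :=
        I6c.add I7c
      rw [e, integral_add I67 I8c, integral_add I6c I7c,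
        integral_const_mul, integral_const_mul, integral_const_mul, horth1, horth2]
      ring
    -- step C : pointwise PL bound
    have hq : ∀ ω,
        𝓛 (W t ω) - η₁ * ⟪gradient 𝓛 (W t ω), gradient Fs (W t ω)⟫
          + c * ‖gradient Fs (W t ω)‖ ^ 2
        ≤ 𝓛 (W t ω) - η₁ * μPL * (𝓛 (W t ω) - Lstar) + η₁ * (p ^ 2 * Δ ^ 2) / 2 := by
      intro ω
      set w := W t ω
      have hid : ‖gradient Fs w - gradient 𝓛 w‖ ^ 2
          = ‖gradient Fs w‖ ^ 2 - 2 * ⟪gradient Fs w, gradient 𝓛 w⟫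
            + ‖gradient 𝓛 w‖ ^ 2 := norm_sub_sq_real _ _
      have hsym : ⟪gradient Fs w, gradient 𝓛 w⟫ = ⟪gradient 𝓛 w, gradient Fs w⟫ :=
        real_inner_comm _ _
      have hb2 : ‖gradient Fs w - gradient 𝓛 w‖ ^ 2 ≤ p ^ 2 * Δ ^ 2 := by
        have h := hbias w
        nlinarith [norm_nonneg (gradient Fs w - gradient 𝓛 w)]
      have hpl := hPL w
      rw [hc]
      nlinarith [mul_le_mul_of_nonneg_left hb2 hη0.le,
        mul_le_mul_of_nonneg_left hpl hη0.le,
        mul_nonneg (mul_nonneg hη0.le (sq_nonneg ‖gradient Fs w‖))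
          (sub_nonneg.2 hLη)]
    have IR3 : Integrable (fun ω =>
        𝓛 (W t ω) - η₁ * μPL * (𝓛 (W t ω) - Lstar) + η₁ * (p ^ 2 * Δ ^ 2) / 2) P :=
      (((h𝓛W1 t)).sub (((h𝓛W1 t).sub (integrable_const Lstar)).const_mul (η₁ * μPL))).add
        (integrable_const _)
    have hC : ∫ ω, (𝓛 (W t ω) - η₁ * ⟪gradient 𝓛 (W t ω), gradient Fs (W t ω)⟫
          + c * ‖gradient Fs (W t ω)‖ ^ 2) ∂P
        ≤ ∫ ω, (𝓛 (W t ω) - η₁ * μPL * (𝓛 (W t ω) - Lstar) + η₁ * (p ^ 2 * Δ ^ 2) / 2) ∂P :=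
      integral_mono IR2 IR3 hq
    have hD : ∫ ω, (𝓛 (W t ω) - η₁ * μPL * (𝓛 (W t ω) - Lstar) + η₁ * (p ^ 2 * Δ ^ 2) / 2) ∂P
        = (∫ ω, 𝓛 (W t ω) ∂P) - η₁ * μPL * ((∫ ω, 𝓛 (W t ω) ∂P) - Lstar)
          + η₁ * (p ^ 2 * Δ ^ 2) / 2 := by
      have J0 : Integrable (fun ω => 𝓛 (W t ω) - Lstar) P :=
        (h𝓛W1 t).sub (integrable_const Lstar)
      have J1 : Integrable (fun ω => η₁ * μPL * (𝓛 (W t ω) - Lstar)) P := J0.const_mul _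
      have J2 : Integrable (fun ω => 𝓛 (W t ω) - η₁ * μPL * (𝓛 (W t ω) - Lstar)) P :=
        (h𝓛W1 t).sub J1
      rw [integral_add J2 (integrable_const _), integral_sub (h𝓛W1 t) J1,
        integral_const_mul, integral_sub (h𝓛W1 t) (integrable_const Lstar)]
      simp [measure_univ]
    have hfin : (∫ ω, 𝓛 (W (t + 1) ω) ∂P) ≤
        (∫ ω, 𝓛 (W t ω) ∂P) - η₁ * μPL * ((∫ ω, 𝓛 (W t ω) ∂P) - Lstar)
          + η₁ * (p ^ 2 * Δ ^ 2) / 2 + c * σ ^ 2 := by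
      have h1 : c * ∫ ω, ‖G t ω - gradient Fs (W t ω)‖ ^ 2 ∂P ≤ c * σ ^ 2 :=
        mul_le_mul_of_nonneg_left hDvar hc0
      rw [hB] at hA
      linarith [hA, hC, hD.le, hD.ge]
    rw [hr]
    linarith [hfin]
  -- recursion
  set B : ℝ := p ^ 2 * Δ ^ 2 / (2 * μPL) + η₁ * σ ^ 2 * L / (2 * μPL) with hB
  have hB0 : 0 ≤ B := by positivity
  have hr0 : 0 ≤ r := by rw [hr]; linarith
  have hμB : η₁ * μPL * B = η₁ * (p ^ 2 * Δ ^ 2) / 2 + c * σ ^ 2 := by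
    rw [hB, hc]; field_simp
  have hrec : ∀ n, (∫ ω, 𝓛 (W n ω) ∂P) - Lstar ≤
      r ^ n * ((∫ ω, 𝓛 (W 0 ω) ∂P) - Lstar) + B := by
    intro n; induction n with
    | zero => simp [hB0]
    | succ n ih =>
      calc (∫ ω, 𝓛 (W (n + 1) ω) ∂P) - Lstar
          ≤ r * ((∫ ω, 𝓛 (W n ω) ∂P) - Lstar) + (η₁ * (p ^ 2 * Δ ^ 2) / 2 + c * σ ^ 2) :=
            key n
        _ ≤ r * (r ^ n * ((∫ ω, 𝓛 (W 0 ω) ∂P) - Lstar) + B)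
            + (η₁ * (p ^ 2 * Δ ^ 2) / 2 + c * σ ^ 2) := by
            exact add_le_add_left (mul_le_mul_of_nonneg_left ih hr0) _
        _ = r ^ (n + 1) * ((∫ ω, 𝓛 (W 0 ω) ∂P) - Lstar) + (r * B + η₁ * μPL * B) := by
            rw [← hμB] at *
            ring
        _ = r ^ (n + 1) * ((∫ ω, 𝓛 (W 0 ω) ∂P) - Lstar) + B := by
            rw [hr]; ring
  have h0 : ∫ ω, 𝓛 (W 0 ω) ∂P = 𝓛 w0 := by
    have : (fun ω => 𝓛 (W 0 ω)) = fun _ω => 𝓛 w0 := by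
      funext ω; rw [hW0 ω]
    rw [this, integral_const]
    simp [measure_univ]
  have ha0 : 0 ≤ 𝓛 w0 - Lstar := by linarith [hLstar w0]
  have hexp : r ^ n' ≤ Real.exp (-(η₁ * μPL) * n') := by
    have h1 : r ≤ Real.exp (-(η₁ * μPL)) := by
      have := Real.add_one_le_exp (-(η₁ * μPL))
      rw [hr]; linarith
    calc r ^ n' ≤ Real.exp (-(η₁ * μPL)) ^ n' := pow_le_pow_left₀ hr0 h1 n'
      _ = Real.exp (-(η₁ * μPL) * n') := by
        rw [← Real.exp_nat_mul]; ring_nf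
  have := hrec n'
  rw [h0] at this
  have h2 : r ^ n' * (𝓛 w0 - Lstar) ≤ Real.exp (-(η₁ * μPL) * n') * (𝓛 w0 - Lstar) :=
    mul_le_mul_of_nonneg_right hexp ha0
  rw [hB] at this
  linarith
end

section
/- (Gradual sampling with Δ̂ = 0: O(σ²L log n /(μ²n)) rate.) Let F_s, F_l : ℝ^d → ℝ be differentiable, let p ∈ [0,1], set 𝓛 = (1 − p)F_s + pF_l, and suppose 𝓛 is L-smooth, satisfies the μ-PL condition with infimum value 𝓛*, and ∇F_s = ∇F_l everywhere. Let D₀ = 𝓛(w_0) − 𝓛* > 0, let n ≥ 1 satisfy 2μ²nD₀ ≥ σ²L with σ > 0, and set η₁ = (1/(μn))·log(2μ²nD₀/(σ²L)); assume η₁ ≤ 1/L and η₁μ ≤ 1. Let (W_t) be adapted to a filtration (𝓕_t) with deterministic initial point W_0 = w_0, and let G_t be square-integrable, 𝓕_{t+1}-measurable ℝ^d-valued random vectors with, almost surely, W_{t+1} = W_t − η₁G_t, E[G_t | 𝓕_t] = ∇F_s(W_t), and E[‖G_t − ∇F_s(W_t)‖² | 𝓕_t] ≤ σ². Then E[𝓛(W_n)]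 − 𝓛* ≤ (σ²L/(2μ²n))·(1 + log(2μ²nD₀/(σ²L))). -/
open MeasureTheory RealInnerProductSpace

section Aux
variable {F : Type*} [NormedAddCommGroup F] [InnerProductSpace ℝ F] [CompleteSpace F]

lemma my_fderiv_eq_inner (f : F → ℝ) (x v : F) :
    fderiv ℝ f x v = ⟪gradient f x, v⟫ := by
  rw [gradient]
  rw [← InnerProductSpace.toDual_apply_apply]
  simp

lemma my_descent (f : F → ℝ) (hf : Differentiable ℝ f) {L : ℝ} (hL : 0 ≤ L)
    (hlip : LipschitzWith (Real.toNNReal L) (gradient f)) (x y : F) :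
    f y ≤ f x + ⟪gradient f x, y - x⟫ + L / 2 * ‖y - x‖ ^ 2 := by
  set v := y - x with hv
  have hcontg : Continuous (gradient f) := hlip.continuous
  have key : ∀ t : ℝ, HasDerivAt (fun s : ℝ => f (x + s • v))
      ⟪gradient f (x + t • v), v⟫ t := by
    intro t
    have h1 : HasDerivAt (fun s : ℝ => x + s • v) v t := by
      simpa using ((hasDerivAt_id t).smul_const v).const_add x
    have h2 := (hf (x + t • v)).hasFDerivAt.comp_hasDerivAt t h1
    rw [my_fderiv_eq_inner] at h2
    exact h2
  have cont : Continuous fun t : ℝ => ⟪gradient f (x + t • v), v⟫ := by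
    exact (hcontg.comp (by continuity)).inner continuous_const
  have ftc : ∫ t in (0:ℝ)..1, ⟪gradient f (x + t • v), v⟫
      = f (x + (1:ℝ) • v) - f (x + (0:ℝ) • v) :=
    intervalIntegral.integral_eq_sub_of_hasDerivAt (fun t _ => key t)
      (cont.intervalIntegrable 0 1)
  have hbound : ∀ t ∈ Set.Icc (0:ℝ) 1,
      ⟪gradient f (x + t • v), v⟫ ≤ ⟪gradient f x, v⟫ + L * t * ‖v‖ ^ 2 := by
    intro t ht
    have hdist := hlip.dist_le_mul (x + t • v) x
    have hdist' : ‖gradient f (x + t • v) - gradient f x‖ ≤ L * (t * ‖v‖) := by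
      rw [dist_eq_norm] at hdist
      calc ‖gradient f (x + t • v) - gradient f x‖ ≤ Real.toNNReal L * dist (x + t•v) x := hdist
        _ = L * ‖t • v‖ := by
            rw [dist_eq_norm]
            simp [Real.coe_toNNReal L hL]
        _ = L * (t * ‖v‖) := by rw [norm_smul, Real.norm_eq_abs, abs_of_nonneg ht.1]
    have hsplit : ⟪gradient f (x + t • v), v⟫
        = ⟪gradient f x, v⟫ + ⟪gradient f (x + t • v) - gradient f x, v⟫ := by
      rw [inner_sub_left]; ring
    rw [hsplit]
    have := real_inner_le_norm (gradient f (x + t • v) - gradient f x) v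
    nlinarith [norm_nonneg v, this, hdist']
  have hintle : ∫ t in (0:ℝ)..1, ⟪gradient f (x + t • v), v⟫
      ≤ ∫ t in (0:ℝ)..1, (⟪gradient f x, v⟫ + L * t * ‖v‖ ^ 2) := by
    apply intervalIntegral.integral_mono_on zero_le_one (cont.intervalIntegrable 0 1)
      (by apply Continuous.intervalIntegrable; continuity) hbound
  have hrhs : ∫ t in (0:ℝ)..1, (⟪gradient f x, v⟫ + L * t * ‖v‖ ^ 2)
      = ⟪gradient f x, v⟫ + L / 2 * ‖v‖ ^ 2 := by
    rw [intervalIntegral.integral_add (by apply Continuous.intervalIntegrable; continuity)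
      (by apply Continuous.intervalIntegrable; continuity)]
    simp only [intervalIntegral.integral_const, smul_eq_mul]
    have : ∫ t in (0:ℝ)..1, L * t * ‖v‖ ^ 2 = L / 2 * ‖v‖ ^ 2 := by
      have : (fun t : ℝ => L * t * ‖v‖ ^ 2) = fun t : ℝ => (L * ‖v‖ ^ 2) * t := by
        ext t; ring
      rw [this, intervalIntegral.integral_const_mul, integral_id]
      ring
    rw [this]; ring
  have : f (x + (1:ℝ) • v) - f (x + (0:ℝ) • v) ≤ ⟪gradient f x, v⟫ + L / 2 * ‖v‖ ^ 2 := by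
    rw [← ftc]; rw [hrhs] at hintle; exact hintle
  simp only [one_smul, zero_smul, add_zero] at this
  have hxy : x + v = y := by rw [hv]; abel
  rw [hxy] at this
  linarith

end Aux

section Prob
variable {Ω : Type*} {mΩ : MeasurableSpace Ω} {P : Measure Ω}
variable {F : Type*} [NormedAddCommGroup F] [InnerProductSpace ℝ F]

lemma my_integrable_inner {f g : Ω → F} (hf : MemLp f 2 P) (hg : MemLp g 2 P) :
    Integrable (fun ω => ⟪f ω, g ω⟫) P := by
  have h := L2.integrable_inner (𝕜 := ℝ) (hf.toLp f) (hg.toLp g)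
  refine h.congr ?_
  filter_upwards [hf.coeFn_toLp, hg.coeFn_toLp] with ω h1 h2
  rw [h1, h2]

lemma my_integrable_sq {f : Ω → F} (hf : MemLp f 2 P) :
    Integrable (fun ω => ‖f ω‖ ^ 2) P := by
  have h := my_integrable_inner hf hf
  simpa [real_inner_self_eq_norm_sq] using h

lemma my_integrable_mul {f g : Ω → ℝ} (hf : MemLp f 2 P) (hg : MemLp g 2 P) :
    Integrable (fun ω => f ω * g ω) P := by
  have h := my_integrable_inner hg hf
  simpa [RCLike.inner_apply, starRingEnd_apply] using h

end Prob

section Cond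
variable {Ω : Type*} {mΩ : MeasurableSpace Ω} {P : Measure Ω} [IsProbabilityMeasure P]
variable {d : ℕ}

/-- If `X` is `m`-measurable and in `L²`, `Z` is in `L²` with `E[Z|m] = 0` a.e.,
then `E⟪X, Z⟫ = 0`. -/
lemma my_integral_inner_zero {m : MeasurableSpace Ω} (hm : m ≤ mΩ)
    {X Z : Ω → EuclideanSpace ℝ (Fin d)}
    (hXm : StronglyMeasurable[m] X) (hX2 : MemLp X 2 P) (hZ2 : MemLp Z 2 P)
    (hZ : P[Z|m] =ᵐ[P] 0) :
    ∫ ω, ⟪X ω, Z ω⟫ ∂P = 0 := by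
  letI : MeasurableSpace Ω := mΩ
  have hZint : Integrable Z P := hZ2.integrable one_le_two
  -- coordinate functions
  have hXi2 : ∀ i, MemLp (fun ω => X ω i) 2 P := fun i =>
    (EuclideanSpace.proj i (𝕜 := ℝ)).comp_memLp' hX2
  have hZi2 : ∀ i, MemLp (fun ω => Z ω i) 2 P := fun i =>
    (EuclideanSpace.proj i (𝕜 := ℝ)).comp_memLp' hZ2
  -- condexp of each coordinate of Z is 0
  have hZi : ∀ i, (fun _ => (0:ℝ)) =ᵐ[P] P[(fun ω => Z ω i)|m] := by
    intro i
    refine ae_eq_condExp_of_forall_setIntegral_eq hm ((hZi2 i).integrable one_le_two)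
      (fun s _ _ => (integrable_zero _ _ _).integrableOn) (fun s hs hμs => ?_)
      (stronglyMeasurable_const.aestronglyMeasurable)
    have h0 := setIntegral_condExp hm hZint hs
    have h1 : ∫ ω in s, Z ω ∂P = 0 := by
      rw [← h0]
      calc ∫ ω in s, (P[Z|m]) ω ∂P = ∫ ω in s, (0 : EuclideanSpace ℝ (Fin d)) ∂P := by
            apply setIntegral_congr_ae (hm s hs)
            filter_upwards [hZ] with ω h _
            exact h
        _ = 0 := by simp
    have h2 := ContinuousLinearMap.integral_comp_comm (EuclideanSpace.proj i (𝕜 := ℝ))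
        (hZint.integrableOn : IntegrableOn Z s P)
    have h3 : ∫ (x : Ω) in s, Z x i ∂P = (EuclideanSpace.proj i (𝕜 := ℝ)) (∫ (x : Ω) in s, Z x ∂P) := h2
    rw [h3, h1]
    simp
  -- each coordinate integral vanishes
  have hcoord : ∀ i, ∫ ω, X ω i * Z ω i ∂P = 0 := by
    intro i
    have hXim : StronglyMeasurable[m] (fun ω => X ω i) :=
      (EuclideanSpace.proj i (𝕜 := ℝ)).continuous.comp_stronglyMeasurable hXm
    have hmul : Integrable (fun ω => X ω i * Z ω i) P := my_integrable_mul (hXi2 i) (hZi2 i)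
    have hpull := condExp_mul_of_stronglyMeasurable_left hXim hmul ((hZi2 i).integrable one_le_two)
    have hic : ∫ ω, X ω i * Z ω i ∂P = ∫ ω, (P[(fun ω => X ω i) * (fun ω => Z ω i)|m]) ω ∂P :=
      (integral_condExp hm).symm
    rw [hic]
    have heq : (P[(fun ω => X ω i) * (fun ω => Z ω i)|m]) =ᵐ[P] fun _ => (0:ℝ) := by
      filter_upwards [hpull, (hZi i).symm] with ω h1 h2
      rw [h1]
      show X ω i * (P[fun ω => Z ω i|m]) ω = 0
      rw [h2, mul_zero]
    rw [integral_congr_ae heq]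
    simp
  -- sum over coordinates
  have hinner : ∀ ω, ⟪X ω, Z ω⟫ = ∑ i, X ω i * Z ω i := by
    intro ω
    simp [PiLp.inner_apply, RCLike.inner_apply, starRingEnd_apply, mul_comm]
  simp_rw [hinner]
  rw [integral_finset_sum]
  · exact Finset.sum_eq_zero fun i _ => hcoord i
  · exact fun i _ => my_integrable_mul (hXi2 i) (hZi2 i)

end Cond

lemma my_step_arith (η L μ σ Lstar : ℝ) (hη : 0 ≤ η) (hηL : η * L ≤ 1)
    (E1 E0 IX IG : ℝ)
    (hs : E1 ≤ E0 - η * IX + L * η ^ 2 / 2 * IG) (hg : IG ≤ IX + σ ^ 2)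
    (hp : 2 * μ * (E0 - Lstar) ≤ IX) (hx : 0 ≤ IX) (hLη2 : 0 ≤ L * η ^ 2 / 2) :
    E1 - Lstar ≤ (1 - η * μ) * (E0 - Lstar) + L * η ^ 2 * σ ^ 2 / 2 := by
  nlinarith [mul_nonneg hη hx,
    mul_nonneg (mul_nonneg hη hx) (sub_nonneg.mpr hηL),
    mul_nonneg hη (sub_nonneg.mpr hp),
    mul_le_mul_of_nonneg_left hg hLη2]

set_option maxHeartbeats 2000000 in
/-- Gradual sampling with `Δ̂ = 0` (the gradients of the easy and difficult
components agree): with the step size `η₁ = log(2 μ² n D₀ / (σ² L)) / (μ n)`,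
after `n` steps the expected excess risk is `O(σ² L log n / (μ² n))`. -/
theorem gradual_sampling_zero_bias_rate
    {d : ℕ} (Fs Fl : EuclideanSpace ℝ (Fin d) → ℝ) (p : ℝ)
    (hp0 : 0 ≤ p) (hp1 : p ≤ 1)
    (hFs : Differentiable ℝ Fs) (hFl : Differentiable ℝ Fl)
    (𝓛 : EuclideanSpace ℝ (Fin d) → ℝ)
    (h𝓛 : 𝓛 = fun v => (1 - p) * Fs v + p * Fl v)
    (L μPL Lstar σ : ℝ) (hL : 0 < L)
    (hsmooth : LipschitzWith (Real.toNNReal L) (gradient 𝓛))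
    (hμ : 0 < μPL)
    (hattained : ∃ wstar, 𝓛 wstar = Lstar ∧ ∀ v, Lstar ≤ 𝓛 v)
    (hPL : ∀ v, 2 * μPL * (𝓛 v - Lstar) ≤ ‖gradient 𝓛 v‖ ^ 2)
    (hgradeq : ∀ v, gradient Fs v = gradient Fl v)
    (w0 : EuclideanSpace ℝ (Fin d)) (D₀ : ℝ) (hD₀ : D₀ = 𝓛 w0 - Lstar)
    (hD₀pos : 0 < D₀) (hσ : 0 < σ)
    (n : ℕ) (hn : 1 ≤ n) (hnlarge : σ ^ 2 * L ≤ 2 * μPL ^ 2 * n * D₀)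
    (η₁ : ℝ) (hη₁def : η₁ = 1 / (μPL * n) * Real.log (2 * μPL ^ 2 * n * D₀ / (σ ^ 2 * L)))
    (hη₁ : η₁ ≤ 1 / L) (hη₁μ : η₁ * μPL ≤ 1)
    {Ω : Type*} {mΩ : MeasurableSpace Ω} (P : Measure Ω) [IsProbabilityMeasure P]
    (ℱ : Filtration ℕ mΩ)
    (W G : ℕ → Ω → EuclideanSpace ℝ (Fin d))
    (hadapted : Adapted ℱ W)
    (hGmeas : ∀ t, StronglyMeasurable[ℱ (t + 1)] (G t))
    (hG2 : ∀ t, MemLp (G t) 2 P)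
    (hW0 : ∀ ω, W 0 ω = w0)
    (hupdate : ∀ t, ∀ᵐ ω ∂P, W (t + 1) ω = W t ω - η₁ • G t ω)
    (hmean : ∀ t, P[G t | ℱ t] =ᵐ[P] fun ω => gradient Fs (W t ω))
    (hvar : ∀ t, ∀ᵐ ω ∂P,
      (P[(fun ω' => ‖G t ω' - gradient Fs (W t ω')‖ ^ 2) | ℱ t]) ω ≤ σ ^ 2) :
    (∫ ω, 𝓛 (W n ω) ∂P) - Lstar ≤
      σ ^ 2 * L / (2 * μPL ^ 2 * n) *
        (1 + Real.log (2 * μPL ^ 2 * n * D₀ / (σ ^ 2 * L))) := by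
  -- basic numeric facts
  have hn1 : (1:ℝ) ≤ (n:ℝ) := by exact_mod_cast hn
  have hnpos : (0:ℝ) < (n:ℝ) := lt_of_lt_of_le one_pos hn1
  have hσL : (0:ℝ) < σ ^ 2 * L := by positivity
  set C : ℝ := 2 * μPL ^ 2 * n * D₀ / (σ ^ 2 * L) with hCdef
  have hC1 : 1 ≤ C := (one_le_div hσL).mpr hnlarge
  have hCpos : 0 < C := lt_of_lt_of_le one_pos hC1
  have hlogC : 0 ≤ Real.log C := Real.log_nonneg hC1
  have hη₁nonneg : 0 ≤ η₁ := by
    rw [hη₁def]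
    have : 0 < μPL * n := by positivity
    positivity
  have hη₁L : η₁ * L ≤ 1 := by
    rw [le_div_iff₀ hL] at hη₁
    linarith
  -- gradient of 𝓛 equals gradient of Fs
  have hgradL : ∀ v, gradient 𝓛 v = gradient Fs v := by
    intro v
    have h1 : HasFDerivAt 𝓛 ((1 - p) • fderiv ℝ Fs v + p • fderiv ℝ Fl v) v := by
      rw [h𝓛]
      exact ((hFs v).hasFDerivAt.const_mul (1 - p)).add ((hFl v).hasFDerivAt.const_mul p)
    have h2 : fderiv ℝ 𝓛 v = (1 - p) • fderiv ℝ Fs v + p • fderiv ℝ Fl v := h1.fderiv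
    rw [gradient, h2, map_add, LinearIsometryEquiv.map_smul, LinearIsometryEquiv.map_smul]
    show (1 - p) • gradient Fs v + p • gradient Fl v = gradient Fs v
    rw [← hgradeq v, ← add_smul]
    simp
  have h𝓛diff : Differentiable ℝ 𝓛 := by
    rw [h𝓛]
    exact ((hFs.const_mul (1 - p)).add (hFl.const_mul p))
  have h𝓛cont : Continuous 𝓛 := h𝓛diff.continuous
  have hgcont : Continuous (gradient Fs) := by
    have := hsmooth.continuous
    rw [show gradient Fs = gradient 𝓛 from funext fun v => (hgradL v).symm]
    exact this
  have hdesc : ∀ x y : EuclideanSpace ℝ (Fin d),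
      𝓛 y ≤ 𝓛 x + ⟪gradient Fs x, y - x⟫ + L / 2 * ‖y - x‖ ^ 2 := by
    intro x y
    have := my_descent 𝓛 h𝓛diff hL.le hsmooth x y
    rwa [hgradL] at this
  have hlipFs : ∀ a b : EuclideanSpace ℝ (Fin d),
      ‖gradient Fs a - gradient Fs b‖ ≤ L * ‖a - b‖ := by
    intro a b
    have := hsmooth.dist_le_mul a b
    rw [← hgradL a, ← hgradL b, dist_eq_norm, dist_eq_norm] at *
    calc ‖gradient 𝓛 a - gradient 𝓛 b‖ ≤ Real.toNNReal L * ‖a - b‖ := this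
      _ = L * ‖a - b‖ := by rw [Real.coe_toNNReal L hL.le]
  -- measurability and integrability
  have hWm : ∀ t, StronglyMeasurable (W t) := fun t => ((hadapted t).mono (ℱ.le t) le_rfl).stronglyMeasurable
  have hW2 : ∀ t, MemLp (W t) 2 P := by
    intro t
    induction t with
    | zero =>
        exact (memLp_const w0).ae_eq (Filter.Eventually.of_forall fun ω => (hW0 ω).symm)
    | succ t ih =>
        refine (ih.sub ((hG2 t).const_smul η₁)).ae_eq ?_
        filter_upwards [hupdate t] with ω h
        simp [h]
  have hXsm : ∀ t, StronglyMeasurable[ℱ t] (fun ω => gradient Fs (W t ω)) := fun t =>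
    hgcont.comp_stronglyMeasurable (hadapted t).stronglyMeasurable
  have hX2 : ∀ t, MemLp (fun ω => gradient Fs (W t ω)) 2 P := by
    intro t
    have hb : MemLp (fun ω => ‖gradient Fs w0‖ + L * ‖W t ω - w0‖) 2 P :=
      (memLp_const ‖gradient Fs w0‖).add ((((hW2 t).sub (memLp_const w0)).norm).const_mul L)
    refine MemLp.of_le hb (((hXsm t).mono (ℱ.le t)).aestronglyMeasurable) ?_
    refine Filter.Eventually.of_forall fun ω => ?_
    have h1 : ‖gradient Fs (W t ω)‖ ≤ ‖gradient Fs w0‖ + L * ‖W t ω - w0‖ := by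
      have h2 := hlipFs (W t ω) w0
      have h3 := norm_sub_norm_le (gradient Fs (W t ω)) (gradient Fs w0)
      linarith
    calc ‖gradient Fs (W t ω)‖ ≤ ‖gradient Fs w0‖ + L * ‖W t ω - w0‖ := h1
      _ ≤ ‖‖gradient Fs w0‖ + L * ‖W t ω - w0‖‖ := le_abs_self _
  have hZ2 : ∀ t, MemLp (fun ω => G t ω - gradient Fs (W t ω)) 2 P := fun t =>
    (hG2 t).sub (hX2 t)
  have hbound𝓛 : ∀ w : EuclideanSpace ℝ (Fin d),
      |𝓛 w| ≤ |𝓛 w0| + ‖gradient Fs w0‖ * ‖w - w0‖ + 3 / 2 * L * ‖w - w0‖ ^ 2 := by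
    intro w
    have h1 := hdesc w0 w
    have h2 := hdesc w w0
    have h3 := real_inner_le_norm (gradient Fs w0) (w - w0)
    have h4 := real_inner_le_norm (gradient Fs w) (w0 - w)
    have h5 : ‖gradient Fs w‖ ≤ ‖gradient Fs w0‖ + L * ‖w - w0‖ := by
      have ha := hlipFs w w0
      have hb := norm_sub_norm_le (gradient Fs w) (gradient Fs w0)
      linarith
    have h6 : ‖w0 - w‖ = ‖w - w0‖ := norm_sub_rev w0 w
    rw [h6] at h4 h2
    have hnn : (0:ℝ) ≤ ‖w - w0‖ := norm_nonneg _
    have hG0 : (0:ℝ) ≤ ‖gradient Fs w‖ := norm_nonneg _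
    have h7 : ⟪gradient Fs w, w0 - w⟫ ≤ (‖gradient Fs w0‖ + L * ‖w - w0‖) * ‖w - w0‖ := by
      calc ⟪gradient Fs w, w0 - w⟫ ≤ ‖gradient Fs w‖ * ‖w - w0‖ := h4
        _ ≤ (‖gradient Fs w0‖ + L * ‖w - w0‖) * ‖w - w0‖ :=
          mul_le_mul_of_nonneg_right h5 hnn
    -- abstract to real variables
    set A := 𝓛 w
    set A0 := 𝓛 w0
    set r := ‖w - w0‖
    set G0 := ‖gradient Fs w0‖
    have hG0nn : (0:ℝ) ≤ G0 := norm_nonneg _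
    have hLr : (0:ℝ) ≤ L * r ^ 2 := by positivity
    have habs := le_abs_self A0
    have habs' := neg_abs_le A0
    rw [abs_le]
    have h8 : (G0 + L * r) * r = G0 * r + L * r ^ 2 := by ring
    rw [h8] at h7
    constructor
    · linarith [h2, h7, habs', hLr]
    · linarith [h1, h3, habs, hLr]
  have hint𝓛 : ∀ t, Integrable (fun ω => 𝓛 (W t ω)) P := by
    intro t
    have hnormint : Integrable (fun ω => ‖W t ω - w0‖) P :=
      (((hW2 t).sub (memLp_const w0)).integrable one_le_two).norm
    have hsqint : Integrable (fun ω => ‖W t ω - w0‖ ^ 2) P :=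
      my_integrable_sq ((hW2 t).sub (memLp_const w0))
    have hb : Integrable (fun ω =>
        |𝓛 w0| + ‖gradient Fs w0‖ * ‖W t ω - w0‖ + 3 / 2 * L * ‖W t ω - w0‖ ^ 2) P :=
      ((integrable_const _).add (hnormint.const_mul _)).add (hsqint.const_mul _)
    refine Integrable.mono' hb (h𝓛cont.comp_aestronglyMeasurable
      (hWm t).aestronglyMeasurable) ?_
    refine Filter.Eventually.of_forall fun ω => ?_
    exact hbound𝓛 (W t ω)
  -- conditional expectation facts
  have hXint : ∀ t, Integrable (fun ω => gradient Fs (W t ω)) P := fun t =>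
    (hX2 t).integrable one_le_two
  have hGint : ∀ t, Integrable (G t) P := fun t => (hG2 t).integrable one_le_two
  have hZmean : ∀ t,
      P[G t - (fun ω => gradient Fs (W t ω))|ℱ t] =ᵐ[P] 0 := by
    intro t
    have h2 : P[(fun ω => gradient Fs (W t ω))|ℱ t] = fun ω => gradient Fs (W t ω) :=
      condExp_of_stronglyMeasurable (ℱ.le t) (hXsm t) (hXint t)
    filter_upwards [condExp_sub (hGint t) (hXint t) (m := ℱ t), hmean t] with ω h1 hm
    rw [h1]
    show (P[G t|ℱ t]) ω - (P[(fun ω => gradient Fs (W t ω))|ℱ t]) ω = 0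
    rw [h2, hm]
    simp
  -- the one-step inequality
  have key : ∀ t, (∫ ω, 𝓛 (W (t+1) ω) ∂P) - Lstar ≤
      (1 - η₁ * μPL) * ((∫ ω, 𝓛 (W t ω) ∂P) - Lstar) + L * η₁ ^ 2 * σ ^ 2 / 2 := by
    intro t
    have hXsq : Integrable (fun ω => ‖gradient Fs (W t ω)‖ ^ 2) P := my_integrable_sq (hX2 t)
    have hZsq : Integrable (fun ω => ‖G t ω - gradient Fs (W t ω)‖ ^ 2) P :=
      my_integrable_sq (hZ2 t)
    have hGsq : Integrable (fun ω => ‖G t ω‖ ^ 2) P := my_integrable_sq (hG2 t)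
    have hXG : Integrable (fun ω => ⟪gradient Fs (W t ω), G t ω⟫) P :=
      my_integrable_inner (hX2 t) (hG2 t)
    have hXZ : Integrable (fun ω => ⟪gradient Fs (W t ω), G t ω - gradient Fs (W t ω)⟫) P :=
      my_integrable_inner (hX2 t) (hZ2 t)
    have hinnerzero : ∫ ω, ⟪gradient Fs (W t ω), G t ω - gradient Fs (W t ω)⟫ ∂P = 0 :=
      my_integral_inner_zero (ℱ.le t) (hXsm t) (hX2 t) (hZ2 t) (hZmean t)
    have hEZ : ∫ ω, ‖G t ω - gradient Fs (W t ω)‖ ^ 2 ∂P ≤ σ ^ 2 := by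
      have h1 : ∫ ω, ‖G t ω - gradient Fs (W t ω)‖ ^ 2 ∂P
          = ∫ ω, (P[(fun ω' => ‖G t ω' - gradient Fs (W t ω')‖ ^ 2)|ℱ t]) ω ∂P :=
        (integral_condExp (ℱ.le t)).symm
      rw [h1]
      calc ∫ ω, (P[(fun ω' => ‖G t ω' - gradient Fs (W t ω')‖ ^ 2)|ℱ t]) ω ∂P
          ≤ ∫ _ω, σ ^ 2 ∂P := integral_mono_ae integrable_condExp (integrable_const _) (hvar t)
        _ = σ ^ 2 := by simp
    have hGeq : ∫ ω, ‖G t ω‖ ^ 2 ∂P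
        = ∫ ω, ‖gradient Fs (W t ω)‖ ^ 2 ∂P
          + (2 * ∫ ω, ⟪gradient Fs (W t ω), G t ω - gradient Fs (W t ω)⟫ ∂P
          + ∫ ω, ‖G t ω - gradient Fs (W t ω)‖ ^ 2 ∂P) := by
      have hpt : (fun ω => ‖G t ω‖ ^ 2) = fun ω => ‖gradient Fs (W t ω)‖ ^ 2
          + (2 * ⟪gradient Fs (W t ω), G t ω - gradient Fs (W t ω)⟫
          + ‖G t ω - gradient Fs (W t ω)‖ ^ 2) := by
        funext ω
        have hG : gradient Fs (W t ω) + (G t ω - gradient Fs (W t ω)) = G t ω := by abel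
        rw [← hG, norm_add_sq_real]
        ring_nf
        rw [hG]
      have hI2 : Integrable (fun ω =>
          2 * ⟪gradient Fs (W t ω), G t ω - gradient Fs (W t ω)⟫) P := hXZ.const_mul 2
      have hI23 : Integrable (fun ω =>
          2 * ⟪gradient Fs (W t ω), G t ω - gradient Fs (W t ω)⟫
          + ‖G t ω - gradient Fs (W t ω)‖ ^ 2) P := hI2.add hZsq
      rw [hpt, integral_add hXsq hI23, integral_add hI2 hZsq, integral_const_mul]
    have hGle : ∫ ω, ‖G t ω‖ ^ 2 ∂P ≤ ∫ ω, ‖gradient Fs (W t ω)‖ ^ 2 ∂P + σ ^ 2 := by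
      rw [hGeq, hinnerzero]
      linarith [hEZ]
    have hXGeq : ∫ ω, ⟪gradient Fs (W t ω), G t ω⟫ ∂P
        = ∫ ω, ‖gradient Fs (W t ω)‖ ^ 2 ∂P := by
      have hpt : (fun ω => ⟪gradient Fs (W t ω), G t ω⟫)
          = fun ω => ‖gradient Fs (W t ω)‖ ^ 2
            + ⟪gradient Fs (W t ω), G t ω - gradient Fs (W t ω)⟫ := by
        funext ω
        rw [inner_sub_right, real_inner_self_eq_norm_sq]
        ring
      rw [hpt, integral_add hXsq hXZ, hinnerzero, add_zero]
    have hdescae : ∀ᵐ ω ∂P, 𝓛 (W (t+1) ω)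
        ≤ 𝓛 (W t ω) - η₁ * ⟪gradient Fs (W t ω), G t ω⟫
          + L * η₁ ^ 2 / 2 * ‖G t ω‖ ^ 2 := by
      filter_upwards [hupdate t] with ω h
      have hd := hdesc (W t ω) (W (t+1) ω)
      rw [h] at hd ⊢
      have hyx : W t ω - η₁ • G t ω - W t ω = -(η₁ • G t ω) := by abel
      rw [hyx, inner_neg_right, real_inner_smul_right, norm_neg, norm_smul] at hd
      have hn2 : (‖η₁‖ * ‖G t ω‖) ^ 2 = η₁ ^ 2 * ‖G t ω‖ ^ 2 := by
        rw [Real.norm_eq_abs, mul_pow, sq_abs]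
      rw [hn2] at hd
      linarith
    have hstep : ∫ ω, 𝓛 (W (t+1) ω) ∂P
        ≤ ∫ ω, 𝓛 (W t ω) ∂P - η₁ * ∫ ω, ⟪gradient Fs (W t ω), G t ω⟫ ∂P
          + L * η₁ ^ 2 / 2 * ∫ ω, ‖G t ω‖ ^ 2 ∂P := by
      have hXGc : Integrable (fun ω => η₁ * ⟪gradient Fs (W t ω), G t ω⟫) P :=
        hXG.const_mul η₁
      have hGsqc : Integrable (fun ω => L * η₁ ^ 2 / 2 * ‖G t ω‖ ^ 2) P :=
        hGsq.const_mul _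
      have hsubint : Integrable (fun ω => 𝓛 (W t ω)
          - η₁ * ⟪gradient Fs (W t ω), G t ω⟫) P := (hint𝓛 t).sub hXGc
      have hrhsint : Integrable (fun ω => 𝓛 (W t ω)
          - η₁ * ⟪gradient Fs (W t ω), G t ω⟫ + L * η₁ ^ 2 / 2 * ‖G t ω‖ ^ 2) P :=
        hsubint.add hGsqc
      have h := integral_mono_ae (hint𝓛 (t+1)) hrhsint hdescae
      rw [integral_add hsubint hGsqc, integral_sub (hint𝓛 t) hXGc, integral_const_mul,
        integral_const_mul] at h
      exact h
    have hPLint : 2 * μPL * ((∫ ω, 𝓛 (W t ω) ∂P) - Lstar)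
        ≤ ∫ ω, ‖gradient Fs (W t ω)‖ ^ 2 ∂P := by
      have hpt : ∀ ω, 2 * μPL * (𝓛 (W t ω) - Lstar) ≤ ‖gradient Fs (W t ω)‖ ^ 2 := fun ω => by
        have := hPL (W t ω)
        rwa [hgradL] at this
      have hlhsint : Integrable (fun ω => 2 * μPL * (𝓛 (W t ω) - Lstar)) P :=
        ((hint𝓛 t).sub (integrable_const _)).const_mul _
      have h := integral_mono hlhsint hXsq hpt
      rw [integral_const_mul, integral_sub (hint𝓛 t) (integrable_const _), integral_const] at h
      simpa [measure_univ] using h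
    have hXsqnn : 0 ≤ ∫ ω, ‖gradient Fs (W t ω)‖ ^ 2 ∂P :=
      integral_nonneg fun ω => by positivity
    rw [hXGeq] at hstep
    exact my_step_arith η₁ L μPL σ Lstar hη₁nonneg hη₁L _ _ _ _ hstep hGle hPLint hXsqnn
      (by positivity)
  -- iterate the recurrence
  have hA0 : (∫ ω, 𝓛 (W 0 ω) ∂P) = 𝓛 w0 := by
    have hfn : (fun ω => 𝓛 (W 0 ω)) = fun _ => 𝓛 w0 := funext fun ω => by rw [hW0]
    rw [hfn, integral_const]
    simp [measure_univ]
  set r : ℝ := 1 - η₁ * μPL with hrdef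
  have hr0 : 0 ≤ r := by rw [hrdef]; linarith
  set c : ℝ := L * η₁ ^ 2 * σ ^ 2 / 2 with hcdef
  have hc0 : 0 ≤ c := by rw [hcdef]; positivity
  have hiter : ∀ t, (∫ ω, 𝓛 (W t ω) ∂P) - Lstar
      ≤ r ^ t * D₀ + c * ∑ k ∈ Finset.range t, r ^ k := by
    intro t
    induction t with
    | zero => simp [hA0, ← hD₀]
    | succ t ih =>
      have h1 := key t
      have h2 := mul_le_mul_of_nonneg_left ih hr0
      have h3 : ∑ k ∈ Finset.range (t+1), r ^ k
          = r * ∑ k ∈ Finset.range t, r ^ k + 1 := geom_sum_succ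
      calc (∫ ω, 𝓛 (W (t+1) ω) ∂P) - Lstar
          ≤ r * ((∫ ω, 𝓛 (W t ω) ∂P) - Lstar) + c := h1
        _ ≤ r * (r ^ t * D₀ + c * ∑ k ∈ Finset.range t, r ^ k) + c := by linarith
        _ = r ^ (t+1) * D₀ + c * (r * ∑ k ∈ Finset.range t, r ^ k + 1) := by ring
        _ = r ^ (t+1) * D₀ + c * ∑ k ∈ Finset.range (t+1), r ^ k := by rw [h3]
  have hfinal := hiter n
  have hqn : η₁ * μPL * n = Real.log C := by
    rw [hη₁def]
    field_simp
  have hrn : r ^ n * D₀ ≤ σ ^ 2 * L / (2 * μPL ^ 2 * n) := by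
    have h1 : r ≤ Real.exp (-(η₁ * μPL)) := by
      have := Real.add_one_le_exp (-(η₁ * μPL))
      rw [hrdef]
      linarith
    have h2 : r ^ n ≤ Real.exp (-(η₁ * μPL)) ^ n := pow_le_pow_left₀ hr0 h1 n
    have h3 : Real.exp (-(η₁ * μPL)) ^ n = Real.exp (-(η₁ * μPL * n)) := by
      rw [← Real.exp_nat_mul]
      ring_nf
    have h4 : Real.exp (-(η₁ * μPL * n)) = 1 / C := by
      rw [hqn, Real.exp_neg, Real.exp_log hCpos, one_div]
    have h5 : r ^ n ≤ 1 / C := by rw [← h4, ← h3]; exact h2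
    calc r ^ n * D₀ ≤ 1 / C * D₀ := mul_le_mul_of_nonneg_right h5 hD₀pos.le
      _ = σ ^ 2 * L / (2 * μPL ^ 2 * n) := by
        rw [hCdef]
        field_simp
  have hcS : c * ∑ k ∈ Finset.range n, r ^ k
      ≤ σ ^ 2 * L / (2 * μPL ^ 2 * n) * Real.log C := by
    rcases eq_or_lt_of_le hη₁nonneg with h0 | hpos
    · have hcz : c = 0 := by rw [hcdef, ← h0]; ring
      rw [hcz, zero_mul]
      positivity
    · have hq : 0 < η₁ * μPL := mul_pos hpos hμ
      have hgs : (∑ k ∈ Finset.range n, r ^ k) * (1 - r) = 1 - r ^ n :=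
        by linear_combination (-1 : ℝ) * geom_sum_mul r n
      have h1r : 1 - r = η₁ * μPL := by rw [hrdef]; ring
      rw [h1r] at hgs
      have hrn' : (0:ℝ) ≤ r ^ n := pow_nonneg hr0 n
      have hS_le : (∑ k ∈ Finset.range n, r ^ k) ≤ 1 / (η₁ * μPL) := by
        rw [le_div_iff₀ hq]
        linarith
      calc c * ∑ k ∈ Finset.range n, r ^ k ≤ c * (1 / (η₁ * μPL)) :=
            mul_le_mul_of_nonneg_left hS_le hc0
        _ = σ ^ 2 * L / (2 * μPL ^ 2 * n) * Real.log C := by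
            have hlogpos : 0 < Real.log C := by
              rw [← hqn]
              positivity
            rw [hcdef, hη₁def]
            field_simp
  have hsplit : σ ^ 2 * L / (2 * μPL ^ 2 * n) * (1 + Real.log C)
      = σ ^ 2 * L / (2 * μPL ^ 2 * n) + σ ^ 2 * L / (2 * μPL ^ 2 * n) * Real.log C := by
    ring
  linarith [hfinal, hrn, hcS]
end
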